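/- Let g = X - X³ + X⁵ be a formal power series over ℚ and let f be the formal power series over ℚ with zero constant coefficient such that substituting f into g yields the identity series X. Then the coefficients of f at X¹, X³, X⁵, X⁷, X⁹, X¹¹, X¹³ are, respectively: 1, 1, 2, 4, 5, -13, -147 (and all coefficients at even powers vanish). In particular f has negative coefficients. -/

import Mathlib

open PowerSeries

/-- Truncation of the compositional inverse. -/
noncomputable def stmt6P : PowerSeries ℚ :=
  X + X ^ 3 + 2 * X ^ 5 + 4 * X ^ 7 + 5 * X ^ 9 - 13 * X ^ 11 - 147 * X ^ 13

/-- The tail series. -/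
noncomputable def stmt6R : PowerSeries ℚ :=
  816 * X + 1086 * X ^ 3 + 1232 * X ^ 5 - 1984 * X ^ 7 - 20456 * X ^ 9
  - 84526 * X ^ 11 - 218416 * X ^ 13 - 153822 * X ^ 15 + 58122 * X ^ 17
  + 1336659 * X ^ 19 + 5465488 * X ^ 21 + 13794596 * X ^ 23 + 19135248 * X ^ 25
  - 6323630 * X ^ 27 - 44679060 * X ^ 29 - 188414870 * X ^ 31 - 484354170 * X ^ 33
  - 733864165 * X ^ 35 - 141099500 * X ^ 37 + 1934036710 * X ^ 39
  + 2975394542 * X ^ 41 + 7705737795 * X ^ 43 + 12993707790 * X ^ 45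
  + 6305398155 * X ^ 47 - 30351677265 * X ^ 49 - 68641485507 * X ^ 51

lemma stmt6P_key : stmt6P - stmt6P ^ 3 + stmt6P ^ 5 = X + X ^ 14 * stmt6R := by
  rw [stmt6P, stmt6R]; ring

lemma stmt6_unique (a b : PowerSeries ℚ) (ha : constantCoeff (R := ℚ) a = 0)
    (hb : constantCoeff (R := ℚ) b = 0)
    (hab : a - a ^ 3 + a ^ 5 = b - b ^ 3 + b ^ 5) : a = b := by
  have key : (a - b) * (1 - (a ^ 2 + a * b + b ^ 2)
      + (a ^ 4 + a ^ 3 * b + a ^ 2 * b ^ 2 + a * b ^ 3 + b ^ 4)) = 0 := by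
    have : (a - b) * (1 - (a ^ 2 + a * b + b ^ 2)
        + (a ^ 4 + a ^ 3 * b + a ^ 2 * b ^ 2 + a * b ^ 3 + b ^ 4))
        = (a - a ^ 3 + a ^ 5) - (b - b ^ 3 + b ^ 5) := by ring
    rw [this, hab, sub_self]
  have hu : constantCoeff (R := ℚ) (1 - (a ^ 2 + a * b + b ^ 2)
      + (a ^ 4 + a ^ 3 * b + a ^ 2 * b ^ 2 + a * b ^ 3 + b ^ 4)) = 1 := by
    simp [ha, hb]
  rcases mul_eq_zero.mp key with h | h
  · exact sub_eq_zero.mp h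
  · exfalso; rw [h, map_zero] at hu; exact one_ne_zero hu.symm

lemma stmt6_cmx (c : ℚ) (n k : ℕ) :
    PowerSeries.coeff (R := ℚ) n ((PowerSeries.C (R := ℚ) c) * PowerSeries.X ^ k) = if n = k then c else 0 := by
  simp [PowerSeries.coeff_C_mul, PowerSeries.coeff_X_pow]

lemma stmt6P_coeff (n : ℕ) : PowerSeries.coeff (R := ℚ) n stmt6P =
    if n = 1 then 1 else if n = 3 then 1 else if n = 5 then 2 else if n = 7 then 4
    else if n = 9 then 5 else if n = 11 then -13 else if n = 13 then -147 else 0 := by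
  rw [stmt6P,
    show ((2:ℚ⟦X⟧)) = PowerSeries.C (R := ℚ) 2 from (map_ofNat _ 2).symm,
    show ((4:ℚ⟦X⟧)) = PowerSeries.C (R := ℚ) 4 from (map_ofNat _ 4).symm,
    show ((5:ℚ⟦X⟧)) = PowerSeries.C (R := ℚ) 5 from (map_ofNat _ 5).symm,
    show ((13:ℚ⟦X⟧)) = PowerSeries.C (R := ℚ) 13 from (map_ofNat _ 13).symm,
    show ((147:ℚ⟦X⟧)) = PowerSeries.C (R := ℚ) 147 from (map_ofNat _ 147).symm]
  by_cases h1 : n = 1 <;> by_cases h3 : n = 3 <;> by_cases h5 : n = 5 <;>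
    by_cases h7 : n = 7 <;> by_cases h9 : n = 9 <;> by_cases h11 : n = 11 <;>
    by_cases h13 : n = 13 <;>
    simp_all [stmt6_cmx, PowerSeries.coeff_X_pow, PowerSeries.coeff_X]

/-- Let `g = X - X³ + X⁵` over `ℚ` and let `f` be a power series with zero
constant coefficient such that substituting `f` into `g` (which gives `f - f³ + f⁵`)
yields `X`.  Then the coefficients of `f` at `X¹, X³, X⁵, X⁷, X⁹, X¹¹, X¹³` are
`1, 1, 2, 4, 5, -13, -147`, all coefficients at even powers vanish, and in particular
`f` has negative coefficients. -/
theorem stmt_6 (f : PowerSeries ℚ) (hf0 : PowerSeries.constantCoeff (R := ℚ) f = 0)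
    (hinv : f - f ^ 3 + f ^ 5 = PowerSeries.X) :
    PowerSeries.coeff (R := ℚ) 1 f = 1 ∧
    PowerSeries.coeff (R := ℚ) 3 f = 1 ∧
    PowerSeries.coeff (R := ℚ) 5 f = 2 ∧
    PowerSeries.coeff (R := ℚ) 7 f = 4 ∧
    PowerSeries.coeff (R := ℚ) 9 f = 5 ∧
    PowerSeries.coeff (R := ℚ) 11 f = -13 ∧
    PowerSeries.coeff (R := ℚ) 13 f = -147 ∧
    (∀ k : ℕ, Even k → PowerSeries.coeff (R := ℚ) k f = 0) ∧
    ∃ k : ℕ, PowerSeries.coeff (R := ℚ) k f < 0 := by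
  have hP0 : constantCoeff (R := ℚ) stmt6P = 0 := by
    rw [stmt6P]; simp
  set u : PowerSeries ℚ := 1 - (f ^ 2 + f * stmt6P + stmt6P ^ 2)
      + (f ^ 4 + f ^ 3 * stmt6P + f ^ 2 * stmt6P ^ 2 + f * stmt6P ^ 3 + stmt6P ^ 4)
    with hu_def
  have hu1 : constantCoeff (R := ℚ) u = 1 := by
    rw [hu_def]; simp [hf0, hP0]
  have huu : IsUnit u := by
    rw [PowerSeries.isUnit_iff_constantCoeff, hu1]; exact isUnit_one
  have key : (f - stmt6P) * u = -(X ^ 14 * stmt6R) := by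
    have : (f - stmt6P) * u = (f - f ^ 3 + f ^ 5)
        - (stmt6P - stmt6P ^ 3 + stmt6P ^ 5) := by rw [hu_def]; ring
    rw [this, hinv, stmt6P_key]; ring
  have hdvd : (X : PowerSeries ℚ) ^ 14 ∣ f - stmt6P := by
    rcases huu with ⟨v, hv⟩
    refine ⟨-stmt6R * (↑v⁻¹ : PowerSeries ℚ), ?_⟩
    have h2 : f - stmt6P = ((f - stmt6P) * u) * (↑v⁻¹ : PowerSeries ℚ) := by
      rw [← hv, mul_assoc]
      simp [← hv, Units.mul_inv_cancel_right]
    rw [h2, key]; ring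
  have hcoeff : ∀ k : ℕ, k < 14 → coeff (R := ℚ) k f = coeff (R := ℚ) k stmt6P := by
    intro k hk
    have := (PowerSeries.X_pow_dvd_iff.mp hdvd) k hk
    rw [map_sub, sub_eq_zero] at this
    exact this
  have hodd : ∀ k : ℕ, Even k → coeff (R := ℚ) k f = 0 := by
    intro k hk
    set h : PowerSeries ℚ := -(rescale (-1 : ℚ) f) with hh
    have hh0 : constantCoeff (R := ℚ) h = 0 := by
      rw [hh]
      simp [PowerSeries.rescale, hf0]
    have hheq : h - h ^ 3 + h ^ 5 = X := by
      have h1 := congrArg (rescale (-1 : ℚ)) hinv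
      rw [map_add, map_sub, map_pow, map_pow, PowerSeries.rescale_neg_one_X] at h1
      rw [hh]
      have h2 : -(rescale (-1 : ℚ) f - (rescale (-1 : ℚ) f) ^ 3
          + (rescale (-1 : ℚ) f) ^ 5) = X := by rw [h1]; ring
      rw [← h2]; ring
    have hfh : f = h := stmt6_unique f h hf0 hh0 (by rw [hinv, hheq])
    have h3 : coeff (R := ℚ) k f = -((-1 : ℚ) ^ k * coeff (R := ℚ) k f) := by
      conv_lhs => rw [hfh]
      rw [hh, map_neg, PowerSeries.coeff_rescale]
    rw [hk.neg_one_pow, one_mul] at h3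
    linarith
  refine ⟨?_, ?_, ?_, ?_, ?_, ?_, ?_, hodd, 11, ?_⟩
  · rw [hcoeff 1 (by norm_num), stmt6P_coeff]; norm_num
  · rw [hcoeff 3 (by norm_num), stmt6P_coeff]; norm_num
  · rw [hcoeff 5 (by norm_num), stmt6P_coeff]; norm_num
  · rw [hcoeff 7 (by norm_num), stmt6P_coeff]; norm_num
  · rw [hcoeff 9 (by norm_num), stmt6P_coeff]; norm_num
  · rw [hcoeff 11 (by norm_num), stmt6P_coeff]; norm_num
  · rw [hcoeff 13 (by norm_num), stmt6P_coeff]; norm_num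
  · rw [hcoeff 11 (by norm_num), stmt6P_coeff]; norm_num
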